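/- Let f : ℝ → ℝ be convex and let [x₁, x₂] ⊆ ℝ be an interval. For any α with f'_-(x₁) ≤ α ≤ f'_+(x₂), the point c = sup{ z ∈ [x₁,x₂] : f'_-(z) ≤ α } satisfies f'_-(c) ≤ α ≤ f'_+(c), i.e., α ∈ ∂f(c). -/

import Mathlib

open Filter Topology Set

def subdiff (f : ℝ → ℝ) (x : ℝ) : Set ℝ :=
  {d : ℝ | ∀ z : ℝ, f x + d * (z - x) ≤ f z}

section aux

variable {f : ℝ → ℝ}

private lemma sl12 (hf : ConvexOn ℝ Set.univ f) {x y z : ℝ} (hxy : x < y) (hyz : y < z) :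
    (f y - f x) / (y - x) ≤ (f z - f x) / (z - x) := by
  have h := hf.slope_mono_adjacent (mem_univ x) (mem_univ z) hxy hyz
  have hp : (0:ℝ) < y - x := by linarith
  have hq : (0:ℝ) < z - y := by linarith
  rw [div_le_div_iff₀ hp hq] at h
  rw [div_le_div_iff₀ hp (by linarith : (0:ℝ) < z - x)]
  nlinarith

private lemma sl23 (hf : ConvexOn ℝ Set.univ f) {x y z : ℝ} (hxy : x < y) (hyz : y < z) :
    (f z - f x) / (z - x) ≤ (f z - f y) / (z - y) := by
  have h := hf.slope_mono_adjacent (mem_univ x) (mem_univ z) hxy hyz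
  have hp : (0:ℝ) < y - x := by linarith
  have hq : (0:ℝ) < z - y := by linarith
  rw [div_le_div_iff₀ hp hq] at h
  rw [div_le_div_iff₀ (by linarith : (0:ℝ) < z - x) hq]
  nlinarith

private lemma slope_comm' (f : ℝ → ℝ) (x y : ℝ) :
    (f y - f x) / (y - x) = (f x - f y) / (x - y) := by
  rw [← neg_div_neg_eq]; ring_nf

private lemma subTendsto (x : ℝ) (s : Set ℝ) :
    Tendsto (fun z : ℝ => z - x) (𝓝[s] x) (𝓝 0) := by
  have h := (continuous_sub_right x).tendsto x
  rw [sub_self] at h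
  exact h.mono_left nhdsWithin_le_nhds

private lemma contWithin {g : ℝ} {x : ℝ} {s : Set ℝ} (hxs : x ∉ s)
    (h : Tendsto (fun z => (f z - f x) / (z - x)) (𝓝[s] x) (𝓝 g)) :
    Tendsto f (𝓝[s] x) (𝓝 (f x)) := by
  have h2 : Tendsto (fun z => (f z - f x) / (z - x) * (z - x) + f x) (𝓝[s] x)
      (𝓝 (g * 0 + f x)) := (h.mul (subTendsto x s)).add tendsto_const_nhds
  rw [mul_zero, zero_add] at h2
  refine h2.congr' ?_
  filter_upwards [self_mem_nhdsWithin] with z hz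
  have : z - x ≠ 0 := sub_ne_zero.2 (fun he => hxs (he ▸ hz))
  field_simp
  ring

end aux

theorem stmt_4 (f : ℝ → ℝ) (hf : ConvexOn ℝ Set.univ f) (fl fr : ℝ → ℝ)
    (hfl : ∀ x : ℝ,
      Filter.Tendsto (fun z => (f z - f x) / (z - x)) (𝓝[<] x) (𝓝 (fl x)))
    (hfr : ∀ x : ℝ,
      Filter.Tendsto (fun z => (f z - f x) / (z - x)) (𝓝[>] x) (𝓝 (fr x)))
    (x₁ x₂ : ℝ) (hx : x₁ ≤ x₂) (α : ℝ) (hα₁ : fl x₁ ≤ α) (hα₂ : α ≤ fr x₂) :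
    fl (sSup {z | z ∈ Set.Icc x₁ x₂ ∧ fl z ≤ α}) ≤ α ∧
    α ≤ fr (sSup {z | z ∈ Set.Icc x₁ x₂ ∧ fl z ≤ α}) ∧
    α ∈ subdiff f (sSup {z | z ∈ Set.Icc x₁ x₂ ∧ fl z ≤ α}) := by
  set S : Set ℝ := {z | z ∈ Set.Icc x₁ x₂ ∧ fl z ≤ α} with hS
  have hSne : S.Nonempty := ⟨x₁, ⟨le_refl _, hx⟩, hα₁⟩
  have hSbdd : BddAbove S := ⟨x₂, fun z hz => hz.1.2⟩
  set c : ℝ := sSup S with hc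
  have hc1 : x₁ ≤ c := le_csSup hSbdd ⟨⟨le_refl _, hx⟩, hα₁⟩
  have hc2 : c ≤ x₂ := csSup_le hSne fun z hz => hz.1.2
  -- (A) for y < x : slope(y,x) ≤ fl x
  have hA : ∀ x y : ℝ, y < x → (f x - f y) / (x - y) ≤ fl x := by
    intro x y hyx
    refine ge_of_tendsto (hfl x) ?_
    filter_upwards [Ioo_mem_nhdsLT hyx] with w hw
    calc (f x - f y) / (x - y) ≤ (f x - f w) / (x - w) := sl23 hf hw.1 hw.2
      _ = (f w - f x) / (w - x) := slope_comm' f w x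
  -- (B) for x < y : fr x ≤ slope(x,y)
  have hB : ∀ x y : ℝ, x < y → fr x ≤ (f y - f x) / (y - x) := by
    intro x y hxy
    refine le_of_tendsto (hfr x) ?_
    filter_upwards [Ioo_mem_nhdsGT hxy] with w hw
    exact sl12 hf hw.1 hw.2
  -- (C) for x < y : fl x ≤ slope(x,y)
  have hC : ∀ x y : ℝ, x < y → fl x ≤ (f y - f x) / (y - x) := by
    intro x y hxy
    refine le_of_tendsto (hfl x) ?_
    filter_upwards [self_mem_nhdsWithin] with u hu
    have h1 : (f x - f u) / (x - u) ≤ (f y - f u) / (y - u) := sl12 hf hu hxy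
    have h2 : (f y - f u) / (y - u) ≤ (f y - f x) / (y - x) := sl23 hf hu hxy
    calc (f u - f x) / (u - x) = (f x - f u) / (x - u) := slope_comm' f x u
      _ ≤ (f y - f x) / (y - x) := h1.trans h2
  -- fl w ≤ α for all w < c
  have hflw : ∀ w : ℝ, w < c → fl w ≤ α := by
    intro w hw
    obtain ⟨s, hsS, hws⟩ := exists_lt_of_lt_csSup hSne hw
    calc fl w ≤ (f s - f w) / (s - w) := hC w s hws
      _ ≤ fl s := hA s w hws
      _ ≤ α := hsS.2
  -- Step A : fl c ≤ α
  have stepA : fl c ≤ α := by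
    refine le_of_tendsto (hfl c) ?_
    filter_upwards [self_mem_nhdsWithin] with z hz
    have hcont : Tendsto f (𝓝[<] c) (𝓝 (f c)) := contWithin (fun h => lt_irrefl c h) (hfl c)
    have hlim : Tendsto (fun w => (f w - f z) / (w - z)) (𝓝[<] c)
        (𝓝 ((f c - f z) / (c - z))) :=
      (hcont.sub tendsto_const_nhds).div
        (by simpa using (continuous_sub_right z).tendsto c |>.mono_left nhdsWithin_le_nhds)
        (sub_ne_zero.2 (ne_of_gt hz))
    have hzc : (f c - f z) / (c - z) ≤ α := by
      refine le_of_tendsto hlim ?_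
      filter_upwards [Ioo_mem_nhdsLT hz] with w hw
      calc (f w - f z) / (w - z) = (f w - f z) / (w - z) := rfl
        _ ≤ fl w := by
            have := hA w z hw.1
            calc (f w - f z) / (w - z) = (f w - f z) / (w - z) := rfl
              _ ≤ fl w := this
        _ ≤ α := hflw w hw.2
    calc (f z - f c) / (z - c) = (f c - f z) / (c - z) := slope_comm' f c z
      _ ≤ α := hzc
  -- Step B : α ≤ fr c
  have stepB : α ≤ fr c := by
    rcases eq_or_lt_of_le hc2 with h | h
    · exact h ▸ hα₂
    · have hflw' : ∀ w : ℝ, c < w → w ≤ x₂ → α < fl w := by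
        intro w hcw hwx
        by_contra hle
        push_neg at hle
        exact absurd (le_csSup hSbdd ⟨⟨hc1.trans hcw.le, hwx⟩, hle⟩) (not_le.2 hcw)
      have key : ∀ z : ℝ, c < z → z ≤ x₂ → α ≤ (f z - f c) / (z - c) := by
        intro z hcz hzx
        have hcont : Tendsto f (𝓝[>] c) (𝓝 (f c)) := contWithin (fun h => lt_irrefl c h) (hfr c)
        have hlim : Tendsto (fun w => (f z - f w) / (z - w)) (𝓝[>] c)
            (𝓝 ((f z - f c) / (z - c))) :=
          (tendsto_const_nhds.sub hcont).div
            (by simpa using (continuous_sub_left z).tendsto c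
              |>.mono_left nhdsWithin_le_nhds)
            (sub_ne_zero.2 (ne_of_gt hcz))
        refine ge_of_tendsto hlim ?_
        filter_upwards [Ioo_mem_nhdsGT hcz] with w hw
        calc α ≤ fl w := (hflw' w hw.1 (hw.2.le.trans hzx)).le
          _ ≤ (f z - f w) / (z - w) := hC w z hw.2
      refine ge_of_tendsto (hfr c) ?_
      filter_upwards [Ioo_mem_nhdsGT h] with z hz
      exact key z hz.1 hz.2.le
  refine ⟨stepA, stepB, ?_⟩
  intro y
  rcases lt_trichotomy y c with h | h | h
  · have h1 : (f c - f y) / (c - y) ≤ α := (hA c y h).trans stepA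
    have h2 : (0:ℝ) < c - y := sub_pos.2 h
    rw [div_le_iff₀ h2] at h1
    nlinarith
  · simp [h]
  · have h1 : α ≤ (f y - f c) / (y - c) := stepB.trans (hB c y h)
    have h2 : (0:ℝ) < y - c := sub_pos.2 h
    rw [le_div_iff₀ h2] at h1
    nlinarith
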